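/- Let (X,μ,T) be an ergodic system with a continuous factor map π to its Kronecker factor (Z,m,R) and fixed disintegration z ↦ η_z of μ over π, where translations on Z are isometries. Then there is a sequence δ(j) → 0 of positive reals such that for μ-almost every x ∈ X the following holds: for every neighborhood U of x, lim_{j→∞} m({z ∈ Z : η_z(U) > 0} ∩ B(π(x), δ(j))) / m(B(π(x), δ(j))) = 1. -/

import Mathlib

open MeasureTheory Filter Metric Set
open scoped ENNReal

set_option linter.unusedSectionVars false
set_option maxHeartbeats 1000000

section Aux
variable {Z : Type*} [MetricSpace Z] [CompactSpace Z] [AddCommGroup Z]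
    [IsTopologicalAddGroup Z] [MeasurableSpace Z] [BorelSpace Z]
    (m : Measure Z) [IsProbabilityMeasure m] [m.IsAddHaarMeasure]

theorem DPP.ball_mem_iff (hiso : ∀ w : Z, Isometry (fun z : Z => z + w)) (z w : Z) (δ : ℝ) :
    w ∈ ball z δ ↔ w - z ∈ ball (0:Z) δ := by
  have h := (hiso z).dist_eq (w - z) 0
  simp only [sub_add_cancel, zero_add] at h
  simp [Metric.mem_ball, h]

theorem DPP.measure_ball_const (hiso : ∀ w : Z, Isometry (fun z : Z => z + w)) (z : Z) (δ : ℝ) :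
    m (ball z δ) = m (ball (0:Z) δ) := by
  have h : ball z δ = (fun w => w + (-z)) ⁻¹' ball (0:Z) δ := by
    ext w
    have := DPP.ball_mem_iff hiso z w δ
    simpa [sub_eq_add_neg] using this
  rw [h, measure_preimage_add_right]

theorem DPP.conv_repr (hiso : ∀ w : Z, Isometry (fun z : Z => z + w)) (S : Set Z)
    (hS : MeasurableSet S) (z : Z) (δ : ℝ) :
    m (S ∩ ball z δ) = ∫⁻ u in ball (0:Z) δ, S.indicator 1 (u + z) ∂m := by
  have hball : MeasurableSet (ball (0:Z) δ) := measurableSet_ball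
  set f : Z → ℝ≥0∞ := (ball (0:Z) δ).indicator (fun u => S.indicator 1 (u + z)) with hf
  have h1 : ∫⁻ u in ball (0:Z) δ, S.indicator 1 (u + z) ∂m = ∫⁻ u, f u ∂m :=
    (lintegral_indicator hball _).symm
  have h2 : ∫⁻ u, f u ∂m = ∫⁻ w, f (w + (-z)) ∂m := (lintegral_add_right_eq_self f (-z)).symm
  have h3 : ∀ w, f (w + (-z)) = (S ∩ ball z δ).indicator (1 : Z → ℝ≥0∞) w := by
    intro w
    have hmem : w + (-z) ∈ ball (0:Z) δ ↔ w ∈ ball z δ := by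
      rw [DPP.ball_mem_iff hiso z w δ, sub_eq_add_neg]
    have hwz : w + (-z) + z = w := by abel
    by_cases hw : w ∈ ball z δ
    · rw [hf]
      simp only [Set.indicator]
      rw [if_pos (hmem.mpr hw), hwz]
      by_cases hS' : w ∈ S
      · simp [Set.indicator, hS', hw]
      · simp [Set.indicator, hS', hw]
    · rw [hf]
      simp only [Set.indicator]
      rw [if_neg (fun hc => hw (hmem.mp hc))]
      simp [Set.indicator, hw]
  rw [h1, h2]
  simp_rw [h3]
  exact (lintegral_indicator_one (hS.inter measurableSet_ball)).symm ▸ rfl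

theorem DPP.meas_conv (S : Set Z) (hS : MeasurableSet S) (δ : ℝ) :
    Measurable (fun z => ∫⁻ u in ball (0:Z) δ, S.indicator 1 (u + z) ∂m) := by
  apply Measurable.lintegral_prod_right' (f := fun p : Z × Z => S.indicator 1 (p.2 + p.1))
  exact (measurable_one.indicator hS).comp (measurable_snd.add measurable_fst)

theorem DPP.tonelli_swap (hiso : ∀ w : Z, Isometry (fun z : Z => z + w)) (A S : Set Z)
    (hA : MeasurableSet A) (hS : MeasurableSet S) (δ : ℝ) :
    ∫⁻ z in A, m (S ∩ ball z δ) ∂m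
      = ∫⁻ u in ball (0:Z) δ, m (A ∩ (fun w => u + w) ⁻¹' S) ∂m := by
  have h1 : ∫⁻ z in A, m (S ∩ ball z δ) ∂m
      = ∫⁻ z in A, ∫⁻ u in ball (0:Z) δ, S.indicator 1 (u + z) ∂m ∂m :=
    lintegral_congr fun z => DPP.conv_repr m hiso S hS z δ
  rw [h1, lintegral_lintegral_swap]
  · refine lintegral_congr fun u => ?_
    rw [← lintegral_indicator hA]
    have h2 : ∀ z, A.indicator (fun z => S.indicator (1 : Z → ℝ≥0∞) (u + z)) z
        = (A ∩ (fun w => u + w) ⁻¹' S).indicator (1 : Z → ℝ≥0∞) z := by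
      intro z
      by_cases hz : z ∈ A <;> by_cases hz2 : u + z ∈ S <;>
        simp [Set.indicator, hz, hz2]
    simp_rw [h2]
    exact lintegral_indicator_one (hA.inter (hS.preimage (by fun_prop)))
  · exact ((measurable_one.indicator hS).comp (measurable_snd.add measurable_fst)).aemeasurable

theorem DPP.translate_cont (hiso : ∀ w : Z, Isometry (fun z : Z => z + w)) (A : Set Z)
    (hA : MeasurableSet A) (ε : ℝ≥0∞) (hε : ε ≠ 0) :
    ∃ r > 0, ∀ u : Z, dist u 0 < r → m (A ∩ (fun w => u + w) ⁻¹' Aᶜ) ≤ ε := by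
  have hε2 : ε / 2 ≠ 0 := by
    simp only [ne_eq, ENNReal.div_eq_zero_iff, hε, false_or, not_false_iff]
    exact ENNReal.ofNat_ne_top
  obtain ⟨K, hKA, hKc, hKm⟩ := hA.exists_isCompact_diff_lt (measure_ne_top m A) hε2
  obtain ⟨O, hAO, hOo, hOm⟩ := hA.exists_isOpen_diff_lt (measure_ne_top m A) hε2
  obtain ⟨r, hr0, hrsub⟩ := hKc.exists_thickening_subset_open hOo (hKA.trans hAO)
  refine ⟨r, hr0, fun u hu => ?_⟩
  have hsub : A ∩ (fun w => u + w) ⁻¹' Aᶜ ⊆ (A \ K) ∪ (fun w => u + w) ⁻¹' (O \ A) := by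
    rintro z ⟨hzA, hzc⟩
    by_cases hzK : z ∈ K
    · right
      have hdist : dist (u + z) z < r := by
        have h := (hiso z).dist_eq u 0
        simp only [zero_add] at h
        rw [h]; exact hu
      exact ⟨hrsub (Metric.mem_thickening_iff.mpr ⟨z, hzK, hdist⟩), hzc⟩
    · left; exact ⟨hzA, hzK⟩
  calc m (A ∩ (fun w => u + w) ⁻¹' Aᶜ)
      ≤ m (A \ K) + m ((fun w => u + w) ⁻¹' (O \ A)) :=
        (measure_mono hsub).trans (measure_union_le _ _)
    _ = m (A \ K) + m (O \ A) := by rw [measure_preimage_add]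
    _ ≤ ε / 2 + ε / 2 := add_le_add hKm.le hOm.2.le
    _ = ε := ENNReal.add_halves ε

end Aux

/-- density-point property: there is a sequence `δ(j) → 0` of positive
reals such that for `μ`-a.e. `x`, for every neighborhood `U` of `x`, the proportion of
the ball `B(π(x), δ(j))` consisting of `z` with `η_z(U) > 0` tends to `1`. -/
theorem density_point_property
    {X : Type*} [MetricSpace X] [CompactSpace X] [MeasurableSpace X] [BorelSpace X]
    {Z : Type*} [MetricSpace Z] [CompactSpace Z] [AddCommGroup Z]
    [IsTopologicalAddGroup Z] [MeasurableSpace Z] [BorelSpace Z]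
    (μ : Measure X) [IsProbabilityMeasure μ]
    (T : X → X) (hThom : IsHomeomorph T) (hT : Ergodic T μ)
    (m : Measure Z) [IsProbabilityMeasure m] [m.IsAddHaarMeasure]
    (α : Z) (hR : Ergodic (fun z => z + α) m)
    (π : X → Z) (hπcont : Continuous π) (hπT : ∀ x, π (T x) = π x + α)
    (hπm : μ.map π = m)
    -- maximality of the Kronecker factor: every eigenfunction of `T` factors through `π`
    (hKron : ∀ (f : X → ℂ) (c : ℂ), Measurable f → (∀ᵐ x ∂μ, f (T x) = c * f x) →
      ∃ g : Z → ℂ, Measurable g ∧ ∀ᵐ x ∂μ, f x = g (π x))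
    -- `η` is a disintegration of `μ` over `π`
    (η : Z → Measure X) (hηprob : ∀ z, IsProbabilityMeasure (η z))
    (hηmeas : Measurable η)
    (hηdis : ∀ s D : Set _, MeasurableSet s → MeasurableSet D →
      μ (s ∩ π ⁻¹' D) = ∫⁻ z in D, η z s ∂m)
    (hηfiber : ∀ᵐ z ∂m, η z (π ⁻¹' {z}) = 1)
    -- translations on `Z` are isometries
    (hiso : ∀ w : Z, Isometry (fun z : Z => z + w)) :
    ∃ δ : ℕ → ℝ, (∀ j, 0 < δ j) ∧ Tendsto δ atTop (nhds 0) ∧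
      ∀ᵐ x ∂μ, ∀ U : Set X, IsOpen U → x ∈ U →
        Tendsto (fun j =>
            m ({z : Z | 0 < η z U} ∩ Metric.ball (π x) (δ j)) /
              m (Metric.ball (π x) (δ j)))
          atTop (nhds 1) := by
  classical
  -- countable basis of X
  obtain ⟨U, hUrange⟩ : ∃ U : ℕ → Set X,
      (insert ∅ (TopologicalSpace.countableBasis X) : Set (Set X)) = Set.range U :=
    ((TopologicalSpace.countable_countableBasis X).insert ∅).exists_eq_range
      (Set.insert_nonempty _ _)
  have hUopen : ∀ n, IsOpen (U n) := by
    intro n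
    have hmem : U n ∈ insert ∅ (TopologicalSpace.countableBasis X) :=
      hUrange ▸ Set.mem_range_self n
    rcases hmem with h | h
    · rw [h]; exact isOpen_empty
    · exact TopologicalSpace.isOpen_of_mem_countableBasis h
  have hbasis : ∀ (x : X) (V : Set X), IsOpen V → x ∈ V → ∃ n, x ∈ U n ∧ U n ⊆ V := by
    intro x V hV hx
    obtain ⟨t, ht, hxt, htV⟩ :=
      (TopologicalSpace.isBasis_countableBasis X).exists_subset_of_mem_open hx hV
    have : t ∈ Set.range U := hUrange ▸ Set.mem_insert_of_mem _ ht
    obtain ⟨n, rfl⟩ := this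
    exact ⟨n, hxt, htV⟩
  set A : ℕ → Set Z := fun n => {z | 0 < η z (U n)} with hAdef
  have hηn : ∀ n, Measurable fun z => η z (U n) := fun n =>
    (Measure.measurable_coe (hUopen n).measurableSet).comp hηmeas
  have hAmeas : ∀ n, MeasurableSet (A n) := fun n =>
    measurableSet_lt measurable_const (hηn n)
  -- a.e. x : π x ∈ A n whenever x ∈ U n
  have hpt : ∀ᵐ x ∂μ, ∀ n, x ∈ U n → π x ∈ A n := by
    rw [ae_all_iff]
    intro n
    set D := {z | η z (U n) = 0} with hD
    have hDmeas : MeasurableSet D := (hηn n) (measurableSet_singleton 0)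
    have hnull : μ (U n ∩ π ⁻¹' D) = 0 := by
      rw [hηdis (U n) D (hUopen n).measurableSet hDmeas]
      have : ∀ᵐ z ∂(m.restrict D), η z (U n) = 0 := by
        rw [ae_restrict_iff' hDmeas]
        exact ae_of_all _ fun z hz => hz
      rw [lintegral_congr_ae this, lintegral_zero]
    refine ae_iff.mpr (measure_mono_null ?_ hnull)
    intro x hx
    simp only [Set.mem_setOf_eq] at hx
    push_neg at hx
    refine ⟨hx.1, ?_⟩
    have h2 := hx.2
    simp only [hAdef, Set.mem_setOf_eq, not_lt, le_zero_iff] at h2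
    exact h2
  -- continuity of translation in measure, choice of radii
  have hεne : ∀ j : ℕ, ((2:ℝ≥0∞)⁻¹ ^ j) ≠ 0 :=
    fun j => pow_ne_zero j (ENNReal.inv_ne_zero.mpr ENNReal.ofNat_ne_top)
  have hcont : ∀ n j : ℕ, ∃ r > 0, ∀ u : Z, dist u 0 < r →
      m (A n ∩ (fun w => u + w) ⁻¹' (A n)ᶜ) ≤ (2:ℝ≥0∞)⁻¹ ^ j :=
    fun n j => DPP.translate_cont m hiso (A n) (hAmeas n) _ (hεne j)
  choose r hr0 hrprop using hcont
  set δ : ℕ → ℝ := fun j =>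
    min (1/(j+1 : ℝ)) ((Finset.range (j+1)).inf' (by simp) fun n => r n j) with hδdef
  have hδpos : ∀ j, 0 < δ j := fun j =>
    lt_min (by positivity) ((Finset.lt_inf'_iff _).mpr fun n _ => hr0 n j)
  have hδle : ∀ j, δ j ≤ 1/(j+1 : ℝ) := fun j => min_le_left _ _
  have hδr : ∀ n j, n ≤ j → δ j ≤ r n j := fun n j hnj =>
    (min_le_right _ _).trans (Finset.inf'_le _ (Finset.mem_range.mpr (Nat.lt_succ_of_le hnj)))
  have hδ0 : Tendsto δ atTop (nhds 0) := by
    refine tendsto_of_tendsto_of_tendsto_of_le_of_le tendsto_const_nhds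
      tendsto_one_div_add_atTop_nhds_zero_nat (fun j => (hδpos j).le) hδle
  -- ball measures
  set c : ℕ → ℝ≥0∞ := fun j => m (ball (0:Z) (δ j)) with hcdef
  have hc0 : ∀ j, c j ≠ 0 := fun j => (measure_ball_pos m 0 (hδpos j)).ne'
  have hcT : ∀ j, c j ≠ ∞ := fun j => measure_ne_top m _
  have hcball : ∀ (z : Z) (j : ℕ), m (ball z (δ j)) = c j :=
    fun z j => DPP.measure_ball_const m hiso z (δ j)
  -- measurability of z ↦ m ((A n)ᶜ ∩ ball z (δ j))
  have hmeasg : ∀ n j, Measurable fun z => m ((A n)ᶜ ∩ ball z (δ j)) := by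
    intro n j
    have h : (fun z => m ((A n)ᶜ ∩ ball z (δ j)))
        = fun z => ∫⁻ u in ball (0:Z) (δ j), ((A n)ᶜ).indicator 1 (u + z) ∂m :=
      funext fun z => DPP.conv_repr m hiso _ (hAmeas n).compl z _
    rw [h]
    exact DPP.meas_conv m _ (hAmeas n).compl _
  -- key integral bound
  have hkey : ∀ n j, n ≤ j →
      ∫⁻ z in A n, m ((A n)ᶜ ∩ ball z (δ j)) ∂m ≤ (2:ℝ≥0∞)⁻¹ ^ j * c j := by
    intro n j hnj
    rw [DPP.tonelli_swap m hiso (A n) (A n)ᶜ (hAmeas n) (hAmeas n).compl (δ j)]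
    calc ∫⁻ u in ball (0:Z) (δ j), m (A n ∩ (fun w => u + w) ⁻¹' (A n)ᶜ) ∂m
        ≤ ∫⁻ _ in ball (0:Z) (δ j), (2:ℝ≥0∞)⁻¹ ^ j ∂m := by
          refine setLIntegral_mono' measurableSet_ball fun u hu => ?_
          exact hrprop n j u ((mem_ball.mp hu).trans_le (hδr n j hnj))
      _ = (2:ℝ≥0∞)⁻¹ ^ j * c j := setLIntegral_const _ _
  -- quotient integrals
  have hquot : ∀ n j, ∫⁻ z in A n, m ((A n)ᶜ ∩ ball z (δ j)) / c j ∂m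
      = (∫⁻ z in A n, m ((A n)ᶜ ∩ ball z (δ j)) ∂m) / c j := by
    intro n j
    simp only [div_eq_mul_inv]
    exact lintegral_mul_const' _ _ (ENNReal.inv_ne_top.mpr (hc0 j))
  -- uniform bound e n j ≤ 2^n * 2⁻¹^j
  have hEb : ∀ n j, ∫⁻ z in A n, m ((A n)ᶜ ∩ ball z (δ j)) / c j ∂m
      ≤ (2:ℝ≥0∞) ^ n * (2:ℝ≥0∞)⁻¹ ^ j := by
    intro n j
    rw [hquot n j]
    rcases le_or_gt n j with hnj | hjn
    · calc (∫⁻ z in A n, m ((A n)ᶜ ∩ ball z (δ j)) ∂m) / c j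
          ≤ ((2:ℝ≥0∞)⁻¹ ^ j * c j) / c j := ENNReal.div_le_div_right (hkey n j hnj) _
        _ = (2:ℝ≥0∞)⁻¹ ^ j := by
            rw [mul_div_assoc, ENNReal.div_self (hc0 j) (hcT j), mul_one]
        _ ≤ (2:ℝ≥0∞) ^ n * (2:ℝ≥0∞)⁻¹ ^ j :=
            le_mul_of_one_le_left (zero_le (a := _)) (Left.one_le_pow_of_le one_le_two n)
    · have hg1 : ∫⁻ z in A n, m ((A n)ᶜ ∩ ball z (δ j)) ∂m ≤ c j * m (A n) := by
        calc ∫⁻ z in A n, m ((A n)ᶜ ∩ ball z (δ j)) ∂m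
            ≤ ∫⁻ _ in A n, c j ∂m := by
              refine setLIntegral_mono' (hAmeas n) fun z _ => ?_
              exact (measure_mono inter_subset_right).trans_eq (hcball z j)
          _ = c j * m (A n) := setLIntegral_const _ _
      have h1 : (∫⁻ z in A n, m ((A n)ᶜ ∩ ball z (δ j)) ∂m) / c j ≤ 1 := by
        calc (∫⁻ z in A n, m ((A n)ᶜ ∩ ball z (δ j)) ∂m) / c j
            ≤ (c j * m (A n)) / c j := ENNReal.div_le_div_right hg1 _
          _ = m (A n) := by
              rw [mul_comm, mul_div_assoc, ENNReal.div_self (hc0 j) (hcT j), mul_one]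
          _ ≤ 1 := prob_le_one
      refine h1.trans ?_
      have h2 : (2:ℝ≥0∞)⁻¹ ^ n ≤ (2:ℝ≥0∞)⁻¹ ^ j :=
        pow_le_pow_right_of_le_one' (ENNReal.inv_le_one.mpr one_le_two) hjn.le
      calc (1:ℝ≥0∞) = (2:ℝ≥0∞) ^ n * (2:ℝ≥0∞)⁻¹ ^ n := by
            rw [← mul_pow, ENNReal.mul_inv_cancel two_ne_zero ENNReal.ofNat_ne_top, one_pow]
        _ ≤ (2:ℝ≥0∞) ^ n * (2:ℝ≥0∞)⁻¹ ^ j := mul_le_mul_right h2 _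
  -- Borel–Cantelli
  have hBC : ∀ n, ∀ᵐ z ∂m, z ∈ A n →
      Tendsto (fun j => m ((A n)ᶜ ∩ ball z (δ j)) / c j) atTop (nhds 0) := by
    intro n
    have hmg : ∀ j, Measurable fun z => m ((A n)ᶜ ∩ ball z (δ j)) / c j := by
      intro j
      simp only [div_eq_mul_inv]
      exact (hmeasg n j).mul_const _
    have hsum : ∫⁻ z in A n, ∑' j, (m ((A n)ᶜ ∩ ball z (δ j)) / c j) ∂m ≠ ∞ := by
      rw [lintegral_tsum fun j => (hmg j).aemeasurable]
      refine ne_top_of_le_ne_top ?_ (ENNReal.tsum_le_tsum (fun j => hEb n j))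
      rw [ENNReal.tsum_mul_left, ENNReal.tsum_geometric, ENNReal.one_sub_inv_two, inv_inv]
      exact ENNReal.mul_ne_top (ENNReal.pow_ne_top ENNReal.ofNat_ne_top) ENNReal.ofNat_ne_top
    have hmt : Measurable fun z => ∑' j, (m ((A n)ᶜ ∩ ball z (δ j)) / c j) :=
      Measurable.ennreal_tsum hmg
    have hae : ∀ᵐ z ∂(m.restrict (A n)),
        (∑' j, m ((A n)ᶜ ∩ ball z (δ j)) / c j) < ∞ := ae_lt_top hmt hsum
    have hae2 : ∀ᵐ z ∂(m.restrict (A n)),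
        Tendsto (fun j => m ((A n)ᶜ ∩ ball z (δ j)) / c j) atTop (nhds 0) := by
      filter_upwards [hae] with z hz
      exact ENNReal.tendsto_atTop_zero_of_tsum_ne_top hz.ne
    exact (ae_restrict_iff' (hAmeas n)).mp hae2
  have hBCall : ∀ᵐ z ∂m, ∀ n, z ∈ A n →
      Tendsto (fun j => m ((A n)ᶜ ∩ ball z (δ j)) / c j) atTop (nhds 0) :=
    ae_all_iff.mpr hBC
  have hμBC : ∀ᵐ x ∂μ, ∀ n, π x ∈ A n →
      Tendsto (fun j => m ((A n)ᶜ ∩ ball (π x) (δ j)) / c j) atTop (nhds 0) := by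
    have hBCall' : ∀ᵐ z ∂(μ.map π), ∀ n, z ∈ A n →
        Tendsto (fun j => m ((A n)ᶜ ∩ ball z (δ j)) / c j) atTop (nhds 0) := by
      rw [hπm]; exact hBCall
    exact ae_of_ae_map hπcont.measurable.aemeasurable hBCall'
  refine ⟨δ, hδpos, hδ0, ?_⟩
  filter_upwards [hpt, hμBC] with x hx1 hx2
  intro V hV hxV
  obtain ⟨n, hxn, hnV⟩ := hbasis x V hV hxV
  have hzA : π x ∈ A n := hx1 n hxn
  have htend0 := hx2 n hzA
  have hsum1 : ∀ j, m (A n ∩ ball (π x) (δ j)) / c j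
      + m ((A n)ᶜ ∩ ball (π x) (δ j)) / c j = 1 := by
    intro j
    have key : m (A n ∩ ball (π x) (δ j)) + m ((A n)ᶜ ∩ ball (π x) (δ j)) = c j := by
      rw [Set.inter_comm (A n), Set.inter_comm ((A n)ᶜ), ← Set.diff_eq,
        measure_inter_add_diff _ (hAmeas n), hcball]
    rw [ENNReal.div_add_div_same, key, ENNReal.div_self (hc0 j) (hcT j)]
  have h1 : Tendsto (fun j => m (A n ∩ ball (π x) (δ j)) / c j) atTop (nhds 1) := by
    have heq : (fun j => m (A n ∩ ball (π x) (δ j)) / c j)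
        = fun j => 1 - m ((A n)ᶜ ∩ ball (π x) (δ j)) / c j := by
      funext j
      exact ENNReal.eq_sub_of_add_eq
        (ENNReal.div_lt_top (measure_ne_top m _) (hc0 j)).ne (hsum1 j)
    rw [heq]
    have := ENNReal.Tendsto.sub (tendsto_const_nhds (x := (1:ℝ≥0∞))) htend0
      (Or.inl ENNReal.one_ne_top)
    simpa using this
  have hsubAV : A n ⊆ {z : Z | 0 < η z V} := fun z hz =>
    lt_of_lt_of_le hz (measure_mono hnV)
  have hmono : ∀ j, m (A n ∩ ball (π x) (δ j)) / c j
      ≤ m ({z : Z | 0 < η z V} ∩ ball (π x) (δ j)) / m (ball (π x) (δ j)) := by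
    intro j
    rw [hcball (π x) j]
    exact ENNReal.div_le_div_right
      (measure_mono (Set.inter_subset_inter_left _ hsubAV)) _
  have hle1 : ∀ j, m ({z : Z | 0 < η z V} ∩ ball (π x) (δ j)) / m (ball (π x) (δ j)) ≤ 1 := by
    intro j
    rw [hcball (π x) j]
    calc m ({z : Z | 0 < η z V} ∩ ball (π x) (δ j)) / c j
        ≤ c j / c j := ENNReal.div_le_div_right
          ((measure_mono inter_subset_right).trans_eq (hcball (π x) j)) _
      _ = 1 := ENNReal.div_self (hc0 j) (hcT j)
  exact tendsto_of_tendsto_of_tendsto_of_le_of_le h1 tendsto_const_nhds hmono hle1
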